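/- arXiv:1903.11356 — 4 statements merged into one kernel-verified Lean document; each statement's English description precedes it below -/
import Mathlib

section
/- Let E be a complex inner product space with inner product ⟪·,·⟫ conjugate-linear in the first argument, and let z, w ∈ E be unit vectors. Define d_F = inf_{a∈ℂ} ‖a·z − w‖, d_P = inf_{θ∈ℝ} ‖exp(iθ)·z − w‖, and ρ = arccos(|⟪z,w⟫|). Then the three distances are related by d_P² = 2 − 2·√(1 − d_F²), d_F = sin ρ, and d_P = 2·sin(ρ/2). -/
/-- For unit vectors `z, w`, with `d_F = inf_a ‖a•z - w‖`,
`d_P = inf_θ ‖exp(iθ)•z - w‖` and `ρ = arccos |⟪z,w⟫|`, one has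
`d_P² = 2 - 2√(1 - d_F²)`, `d_F = sin ρ` and `d_P = 2 sin (ρ/2)`. -/
theorem procrustes_distance_relations {E : Type*} [NormedAddCommGroup E]
    [InnerProductSpace ℂ E] (z w : E) (hz : ‖z‖ = 1) (hw : ‖w‖ = 1) :
    (⨅ θ : ℝ, ‖Complex.exp ((θ : ℂ) * Complex.I) • z - w‖) ^ 2
        = 2 - 2 * Real.sqrt (1 - (⨅ a : ℂ, ‖a • z - w‖) ^ 2) ∧
    (⨅ a : ℂ, ‖a • z - w‖)
        = Real.sin (Real.arccos (‖(inner ℂ z w : ℂ)‖)) ∧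
    (⨅ θ : ℝ, ‖Complex.exp ((θ : ℂ) * Complex.I) • z - w‖)
        = 2 * Real.sin (Real.arccos (‖(inner ℂ z w : ℂ)‖) / 2) := by
  set c : ℂ := inner ℂ z w with hc
  set r : ℝ := ‖c‖ with hrdef
  have hr0 : 0 ≤ r := norm_nonneg c
  have hr1 : r ≤ 1 := by
    have := norm_inner_le_norm (𝕜 := ℂ) z w
    simpa [hz, hw, ← hc, ← hrdef] using this
  have hssq : (0:ℝ) ≤ 1 - r ^ 2 := by nlinarith
  -- key identity for complex scaling
  have key : ∀ a : ℂ, ‖a • z - w‖ ^ 2 = ‖a - c‖ ^ 2 + (1 - r ^ 2) := by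
    intro a
    have h1 := @norm_sub_sq ℂ E _ _ _ (a • z) w
    have h2 := @norm_sub_sq ℂ ℂ _ _ _ a c
    rw [inner_smul_left, ← hc] at h1
    rw [RCLike.inner_apply] at h2
    simp only [norm_smul, hz, hw, mul_one] at h1 h2
    rw [h1, h2, ← hrdef]
    ring
  -- value of d_F
  have bdd : BddBelow (Set.range fun a : ℂ => ‖a • z - w‖) :=
    ⟨0, by rintro x ⟨a, rfl⟩; exact norm_nonneg _⟩
  have dF : (⨅ a : ℂ, ‖a • z - w‖) = Real.sqrt (1 - r ^ 2) := by
    refine le_antisymm ?_ ?_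
    · have hcval : ‖c • z - w‖ = Real.sqrt (1 - r ^ 2) := by
        rw [← Real.sqrt_sq (norm_nonneg (c • z - w)), key c]
        simp
      exact hcval ▸ ciInf_le bdd c
    · refine le_ciInf fun a => ?_
      rw [← Real.sqrt_sq (norm_nonneg (a • z - w)), key a]
      exact Real.sqrt_le_sqrt (le_add_of_nonneg_left (sq_nonneg _))
  -- key identity for rotations
  have keyθ : ∀ θ : ℝ, ‖Complex.exp ((θ : ℂ) * Complex.I) • z - w‖ ^ 2
      = 2 - 2 * (starRingEnd ℂ (Complex.exp ((θ : ℂ) * Complex.I)) * c).re := by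
    intro θ
    have h1 := @norm_sub_sq ℂ E _ _ _ (Complex.exp ((θ : ℂ) * Complex.I) • z) w
    rw [inner_smul_left, ← hc] at h1
    simp only [norm_smul, hz, hw, mul_one, Complex.norm_exp_ofReal_mul_I] at h1
    rw [h1, RCLike.re_to_complex]; ring
  have h2r : (0:ℝ) ≤ 2 - 2 * r := by linarith
  have dP : (⨅ θ : ℝ, ‖Complex.exp ((θ : ℂ) * Complex.I) • z - w‖)
      = Real.sqrt (2 - 2 * r) := by
    have bddθ : BddBelow (Set.range fun θ : ℝ => ‖Complex.exp ((θ : ℂ) * Complex.I) • z - w‖) :=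
      ⟨0, by rintro x ⟨θ, rfl⟩; exact norm_nonneg _⟩
    refine le_antisymm ?_ ?_
    · have hval : ‖Complex.exp ((c.arg : ℂ) * Complex.I) • z - w‖ = Real.sqrt (2 - 2 * r) := by
        rw [← Real.sqrt_sq (norm_nonneg _), keyθ c.arg]
        congr 2
        have : starRingEnd ℂ (Complex.exp ((c.arg : ℂ) * Complex.I)) * c = (r : ℂ) := by
          rw [← Complex.exp_conj]
          simp only [map_mul, Complex.conj_ofReal, Complex.conj_I, mul_neg]
          nth_rewrite 2 [← Complex.norm_mul_exp_arg_mul_I c]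
          rw [← hrdef, mul_comm, mul_assoc, ← Complex.exp_add]
          ring_nf
          simp
        rw [this]
        simp
      exact hval ▸ ciInf_le bddθ c.arg
    · refine le_ciInf fun θ => ?_
      rw [← Real.sqrt_sq (norm_nonneg _), keyθ θ]
      apply Real.sqrt_le_sqrt
      have hle : (starRingEnd ℂ (Complex.exp ((θ : ℂ) * Complex.I)) * c).re ≤ r := by
        calc (starRingEnd ℂ (Complex.exp ((θ : ℂ) * Complex.I)) * c).re
            ≤ ‖(starRingEnd ℂ (Complex.exp ((θ : ℂ) * Complex.I)) * c)‖ :=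
              Complex.re_le_norm _
          _ = r := by
              rw [norm_mul, Complex.norm_conj, Complex.norm_exp_ofReal_mul_I, one_mul]
      linarith
  have hsq : Real.sqrt (1 - (⨅ a : ℂ, ‖a • z - w‖) ^ 2) = r := by
    rw [dF, Real.sq_sqrt hssq]
    rw [show (1:ℝ) - (1 - r ^ 2) = r ^ 2 by ring, Real.sqrt_sq hr0]
  refine ⟨?_, ?_, ?_⟩
  · rw [hsq, dP, Real.sq_sqrt h2r]
  · rw [dF, Real.sin_arccos]
  · rw [dP, Real.sin_half_eq_sqrt (Real.arccos_nonneg r)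
      (by linarith [Real.arccos_le_pi r, Real.pi_pos]),
      Real.cos_arccos (by linarith) hr1,
      show (2:ℝ) - 2 * r = 4 * ((1 - r) / 2) by ring,
      Real.sqrt_mul (by norm_num : (0:ℝ) ≤ 4),
      show (4:ℝ) = 2 ^ 2 by norm_num, Real.sqrt_sq (by norm_num : (0:ℝ) ≤ 2)]
end

section
/- (2DKSD simple formulation.) Let E be a finite-dimensional complex inner product space with inner product ⟪·,·⟫ conjugate-linear in the first argument, let u ∈ E, let K, J, N₀ be positive integers, and let z₁,…,z_K ∈ E be unit vectors with ⟪u,z_k⟫ = 0 for all k. For a dictionary D = (d₁,…,d_J) of vectors of E and weights α ∈ ℂ^J write Dα = ∑_{j=1}^J α[j]·d_j, and call D admissible if each d_j is a unit vector with ⟪u,d_j⟫ = 0, and α sparse if α has at most N₀ nonzero coefficients. Then the infimum, over all admissible D and all sparse α₁,…,α_K with Dα_k ≠ 0 for every k, of ∑_{k=1}^K (1 − |⟪Dα_k/‖Dα_k‖, z_k⟫|²) equals the infimum, over all admissible D and all sparse α₁,…,α_K, of ∑_{k=1}^K ‖z_k − Dα_k‖². -/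
open scoped ComplexConjugate

lemma proj_norm {E : Type*} [NormedAddCommGroup E] [InnerProductSpace ℂ E]
    (w z : E) (hw : ‖w‖ = 1) :
    ‖z - (inner ℂ w z : ℂ) • w‖ ^ 2 = ‖z‖ ^ 2 - ‖(inner ℂ w z : ℂ)‖ ^ 2 := by
  have h := @norm_sub_sq ℂ E _ _ _ z ((inner ℂ w z : ℂ) • w)
  rw [inner_smul_right, norm_smul, hw, ← inner_conj_symm z w, Complex.mul_conj] at h
  rw [h]
  simp only [RCLike.re_to_complex, Complex.ofReal_re,
    Complex.normSq_eq_norm_sq, mul_one]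
  ring

lemma dist_le {E : Type*} [NormedAddCommGroup E] [InnerProductSpace ℂ E]
    (z v : E) (hz : ‖z‖ = 1) (hv : v ≠ 0) :
    1 - ‖(inner ℂ ((‖v‖ : ℂ)⁻¹ • v) z : ℂ)‖ ^ 2 ≤ ‖z - v‖ ^ 2 := by
  have hr : (0:ℝ) < ‖v‖ := norm_pos_iff.2 hv
  have hr2 : (0:ℝ) < ‖v‖ ^ 2 := by positivity
  have h := @norm_sub_sq ℂ E _ _ _ z v
  have hc : (inner ℂ ((‖v‖ : ℂ)⁻¹ • v) z : ℂ) = (‖v‖ : ℂ)⁻¹ * inner ℂ v z := by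
    rw [inner_smul_left]; simp
  set c : ℂ := inner ℂ v z with hcv
  have hre : (RCLike.re (inner ℂ z v : ℂ) : ℝ) = c.re := by
    rw [← inner_conj_symm z v, RCLike.re_to_complex, Complex.conj_re]
  rw [hre] at h
  rw [h, hc]
  have habs : ‖(‖v‖:ℂ)⁻¹ * c‖ = ‖v‖⁻¹ * ‖c‖ := by
    simp [map_mul, abs_of_pos hr]
  rw [habs]
  have h1 : ‖c‖^2 = c.re^2 + c.im^2 := by
    rw [Complex.sq_norm, Complex.normSq_apply]; ring
  have hz1 : ‖z‖ ^ 2 = 1 := by rw [hz]; norm_num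
  rw [hz1, mul_pow, h1]
  have hinv : (‖v‖⁻¹)^2 * (c.re^2 + c.im^2) = (c.re^2 + c.im^2) / ‖v‖^2 := by
    field_simp
  rw [hinv]
  have key : 2*c.re - ‖v‖^2 ≤ (c.re^2 + c.im^2) / ‖v‖^2 := by
    rw [le_div_iff₀ hr2]
    nlinarith [sq_nonneg (c.re - ‖v‖^2), sq_nonneg c.im]
  linarith

lemma unit_norm {E : Type*} [NormedAddCommGroup E] [InnerProductSpace ℂ E]
    (v : E) (hv : v ≠ 0) : ‖(‖v‖ : ℂ)⁻¹ • v‖ = 1 := by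
  rw [norm_smul]
  simp [abs_of_nonneg (norm_nonneg v), inv_mul_cancel₀ (norm_ne_zero_iff.2 hv)]

lemma termA_nonneg {E : Type*} [NormedAddCommGroup E] [InnerProductSpace ℂ E]
    (z v : E) (hz : ‖z‖ = 1) (hv : v ≠ 0) :
    0 ≤ 1 - ‖(inner ℂ ((‖v‖ : ℂ)⁻¹ • v) z : ℂ)‖ ^ 2 := by
  have h1 : ‖(inner ℂ ((‖v‖ : ℂ)⁻¹ • v) z : ℂ)‖ ≤ 1 := by
    calc ‖(inner ℂ ((‖v‖ : ℂ)⁻¹ • v) z : ℂ)‖ ≤ ‖(‖v‖ : ℂ)⁻¹ • v‖ * ‖z‖ := norm_inner_le_norm _ _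
    _ = 1 := by rw [unit_norm v hv, hz, one_mul]
  nlinarith [norm_nonneg (inner ℂ ((‖v‖ : ℂ)⁻¹ • v) z : ℂ)]

lemma termA_le_one {E : Type*} [NormedAddCommGroup E] [InnerProductSpace ℂ E]
    (z v : E) :
    1 - ‖(inner ℂ ((‖v‖ : ℂ)⁻¹ • v) z : ℂ)‖ ^ 2 ≤ 1 := by
  nlinarith [sq_nonneg (‖(inner ℂ ((‖v‖ : ℂ)⁻¹ • v) z : ℂ)‖)]



/-- 2DKSD simple formulation: for pre-shape data `z₁,…,z_K` (unit vectors
orthogonal to the shift vector `u`), the infimum of the summed squared full Procrustes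
distances `∑ₖ (1 - |⟪Dαₖ/‖Dαₖ‖, zₖ⟫|²)` over admissible dictionaries and `N₀`-sparse
complex weights with `Dαₖ ≠ 0` equals the infimum of `∑ₖ ‖zₖ - Dαₖ‖²` over admissible
dictionaries and `N₀`-sparse complex weights. -/
theorem two_dksd_simple_formulation {E : Type*} [NormedAddCommGroup E]
    [InnerProductSpace ℂ E] [FiniteDimensional ℂ E] (u : E)
    (K J N₀ : ℕ) (hK : 0 < K) (hJ : 0 < J) (hN₀ : 0 < N₀)
    (z : Fin K → E) (hz : ∀ k, ‖z k‖ = 1) (huz : ∀ k, (inner ℂ u (z k) : ℂ) = 0) :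
    sInf {s : ℝ | ∃ (d : Fin J → E) (α : Fin K → Fin J → ℂ),
        (∀ j, ‖d j‖ = 1 ∧ (inner ℂ u (d j) : ℂ) = 0) ∧
        (∀ k, Set.ncard {j | α k j ≠ 0} ≤ N₀) ∧
        (∀ k, (∑ j, α k j • d j) ≠ 0) ∧
        s = ∑ k, (1 - ‖
          (inner ℂ ((‖∑ j, α k j • d j‖ : ℂ)⁻¹ • ∑ j, α k j • d j) (z k) : ℂ)‖ ^ 2)}
      = sInf {s : ℝ | ∃ (d : Fin J → E) (α : Fin K → Fin J → ℂ),
        (∀ j, ‖d j‖ = 1 ∧ (inner ℂ u (d j) : ℂ) = 0) ∧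
        (∀ k, Set.ncard {j | α k j ≠ 0} ≤ N₀) ∧
        s = ∑ k, ‖z k - ∑ j, α k j • d j‖ ^ 2} := by
  classical
  set k0 : Fin K := ⟨0, hK⟩
  set j0 : Fin J := ⟨0, hJ⟩
  set d0 : Fin J → E := fun _ => z k0 with hd0def
  have hd0 : ∀ j, ‖d0 j‖ = 1 ∧ (inner ℂ u (d0 j) : ℂ) = 0 := fun j => ⟨hz k0, huz k0⟩
  set e0 : Fin J → ℂ := fun j => if j = j0 then 1 else 0 with he0def
  have hsum_e0 : ∀ d : Fin J → E, (∑ j, e0 j • d j) = d j0 := by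
    intro d
    simp [he0def, ite_smul]
  have he0card : Set.ncard {j | e0 j ≠ 0} ≤ N₀ := by
    have : {j | e0 j ≠ 0} = {j0} := by
      ext j; simp [he0def]
    rw [this, Set.ncard_singleton]
    exact hN₀
  have hAbdd : BddBelow {s : ℝ | ∃ (d : Fin J → E) (α : Fin K → Fin J → ℂ),
        (∀ j, ‖d j‖ = 1 ∧ (inner ℂ u (d j) : ℂ) = 0) ∧
        (∀ k, Set.ncard {j | α k j ≠ 0} ≤ N₀) ∧
        (∀ k, (∑ j, α k j • d j) ≠ 0) ∧
        s = ∑ k, (1 - ‖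
          (inner ℂ ((‖∑ j, α k j • d j‖ : ℂ)⁻¹ • ∑ j, α k j • d j) (z k) : ℂ)‖ ^ 2)} := by
    refine ⟨0, ?_⟩
    rintro s ⟨d, α, hd, hsp, hne, rfl⟩
    exact Finset.sum_nonneg fun k _ => termA_nonneg (z k) _ (hz k) (hne k)
  have hBbdd : BddBelow {s : ℝ | ∃ (d : Fin J → E) (α : Fin K → Fin J → ℂ),
        (∀ j, ‖d j‖ = 1 ∧ (inner ℂ u (d j) : ℂ) = 0) ∧
        (∀ k, Set.ncard {j | α k j ≠ 0} ≤ N₀) ∧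
        s = ∑ k, ‖z k - ∑ j, α k j • d j‖ ^ 2} := by
    refine ⟨0, ?_⟩
    rintro s ⟨d, α, hd, hsp, rfl⟩
    exact Finset.sum_nonneg fun k _ => by positivity
  have hz0ne : z k0 ≠ 0 := by
    intro h
    have := hz k0
    rw [h, norm_zero] at this
    norm_num at this
  have hAne : Set.Nonempty {s : ℝ | ∃ (d : Fin J → E) (α : Fin K → Fin J → ℂ),
        (∀ j, ‖d j‖ = 1 ∧ (inner ℂ u (d j) : ℂ) = 0) ∧
        (∀ k, Set.ncard {j | α k j ≠ 0} ≤ N₀) ∧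
        (∀ k, (∑ j, α k j • d j) ≠ 0) ∧
        s = ∑ k, (1 - ‖
          (inner ℂ ((‖∑ j, α k j • d j‖ : ℂ)⁻¹ • ∑ j, α k j • d j) (z k) : ℂ)‖ ^ 2)} := by
    refine ⟨_, d0, fun _ => e0, hd0, fun _ => he0card, fun k => ?_, rfl⟩
    rw [hsum_e0]
    exact hz0ne
  have hBne : Set.Nonempty {s : ℝ | ∃ (d : Fin J → E) (α : Fin K → Fin J → ℂ),
        (∀ j, ‖d j‖ = 1 ∧ (inner ℂ u (d j) : ℂ) = 0) ∧
        (∀ k, Set.ncard {j | α k j ≠ 0} ≤ N₀) ∧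
        s = ∑ k, ‖z k - ∑ j, α k j • d j‖ ^ 2} := by
    refine ⟨_, d0, fun _ _ => 0, hd0, fun k => ?_, rfl⟩
    simp
  apply le_antisymm
  · -- sInf A ≤ sInf B : for each t ∈ B, exhibit s ∈ A with s ≤ t
    apply le_csInf hBne
    rintro t ⟨d, α, hd, hsp, rfl⟩
    set α' : Fin K → Fin J → ℂ :=
      fun k => if (∑ j, α k j • d j) = 0 then e0 else α k with hα'def
    have hdj0 : d j0 ≠ 0 := by
      intro h
      have := (hd j0).1
      rw [h, norm_zero] at this
      norm_num at this
    have hv' : ∀ k, (∑ j, α' k j • d j) ≠ 0 := by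
      intro k
      by_cases h : (∑ j, α k j • d j) = 0
      · rw [hα'def]; simp only [if_pos h]
        rw [hsum_e0]; exact hdj0
      · rw [hα'def]; simp only [if_neg h]
        exact h
    have hsp' : ∀ k, Set.ncard {j | α' k j ≠ 0} ≤ N₀ := by
      intro k
      by_cases h : (∑ j, α k j • d j) = 0
      · rw [hα'def]; simp only [if_pos h]; exact he0card
      · rw [hα'def]; simp only [if_neg h]; exact hsp k
    refine le_trans (csInf_le hAbdd ⟨d, α', hd, hsp', hv', rfl⟩) ?_
    apply Finset.sum_le_sum
    intro k _
    by_cases h : (∑ j, α k j • d j) = 0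
    · have hα'k : α' k = e0 := by rw [hα'def]; simp only [if_pos h]
      rw [hα'k, hsum_e0, h, sub_zero, hz]
      calc 1 - ‖(inner ℂ ((‖d j0‖ : ℂ)⁻¹ • d j0) (z k) : ℂ)‖ ^ 2
          ≤ 1 := termA_le_one (z k) (d j0)
        _ = 1 ^ 2 := by norm_num
    · have hα'k : α' k = α k := by rw [hα'def]; simp only [if_neg h]
      rw [hα'k]
      exact dist_le (z k) _ (hz k) h
  · -- sInf B ≤ sInf A : A ⊆ B
    apply csInf_le_csInf hBbdd hAne
    rintro s ⟨d, α, hd, hsp, hne, rfl⟩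
    refine ⟨d, fun k j =>
      ((inner ℂ ((‖∑ j, α k j • d j‖ : ℂ)⁻¹ • ∑ j, α k j • d j) (z k) : ℂ)
        * (‖∑ j, α k j • d j‖ : ℂ)⁻¹) * α k j, hd, ?_, ?_⟩
    · intro k
      refine le_trans (Set.ncard_le_ncard ?_ (Set.toFinite _)) (hsp k)
      intro j hj
      simp only [Set.mem_setOf_eq] at hj ⊢
      exact fun h => hj (by rw [h, mul_zero])
    · apply Finset.sum_congr rfl
      intro k _
      set v : E := ∑ j, α k j • d j with hvdef
      set w : E := (‖v‖ : ℂ)⁻¹ • v with hwdef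
      set c : ℂ := inner ℂ w (z k) with hcdef
      have hsum : (∑ j, ((c * (‖v‖ : ℂ)⁻¹) * α k j) • d j) = c • w := by
        calc (∑ j, ((c * (‖v‖ : ℂ)⁻¹) * α k j) • d j)
            = ∑ j, (c * (‖v‖ : ℂ)⁻¹) • (α k j • d j) := by
              apply Finset.sum_congr rfl
              intro j _
              rw [smul_smul]
          _ = (c * (‖v‖ : ℂ)⁻¹) • v := (Finset.smul_sum).symm
          _ = c • w := by rw [hwdef, mul_smul]
      rw [hsum]
      have hw1 : ‖w‖ = 1 := unit_norm v (hne k)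
      have := proj_norm w (z k) hw1
      rw [hz k] at this
      rw [this]
      norm_num
      rfl
end

section
/- Let E be a complex inner product space with inner product ⟪·,·⟫ conjugate-linear in the first argument, let d₁,…,d_J ∈ E, z ∈ E, and N₀ a positive integer; write Dα = ∑_{j=1}^J α[j]·d_j for α ∈ ℂ^J. Suppose α̂ ∈ ℂ^J has at most N₀ nonzero coefficients and minimizes α ↦ ‖z − Dα‖ over all α ∈ ℂ^J with at most N₀ nonzero coefficients. Then ⟪Dα̂, z⟫ = ‖Dα̂‖²; equivalently, if Dα̂ ≠ 0, the orthogonal projection of z onto the complex line ℂ·(Dα̂) is exactly Dα̂. -/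
open ComplexConjugate

lemma line_min_inner {E : Type*} [NormedAddCommGroup E] [InnerProductSpace ℂ E]
    (v z : E) (h : ∀ c : ℂ, ‖z - v‖ ≤ ‖z - c • v‖) :
    (inner ℂ v z : ℂ) = (‖v‖ : ℂ) ^ 2 := by
  by_cases hv : v = 0
  · simp [hv]
  have hvn : (0:ℝ) < ‖v‖ := norm_pos_iff.mpr hv
  have hr : (0:ℝ) < ‖v‖ ^ 2 := by positivity
  set r : ℝ := ‖v‖ ^ 2 with hrdef
  set w : ℂ := inner ℂ v z - (r : ℂ) with hw
  suffices hw0 : w = 0 by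
    have := sub_eq_zero.mp hw0
    rw [this]; norm_cast
  have hsplit : z - (1 + w / (r:ℂ)) • v = (z - v) - (w / (r:ℂ)) • v := by
    rw [add_smul, one_smul]; abel
  have hinner : (inner ℂ (z - v) ((w / (r:ℂ)) • v) : ℂ) = (w / r) * conj w := by
    rw [inner_smul_right, inner_sub_left]
    congr 1
    have h1 : (inner ℂ z v : ℂ) = conj (inner ℂ v z : ℂ) := by
      rw [← inner_conj_symm]
    have h2 : (inner ℂ v v : ℂ) = (r : ℂ) := by
      rw [inner_self_eq_norm_sq_to_K]; norm_cast
    rw [h1, h2, hw]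
    simp [Complex.conj_ofReal]
  have hre : RCLike.re ((w / (r:ℂ)) * conj w) = ‖w‖ ^ 2 / r := by
    have : (w / (r:ℂ)) * conj w = ((‖w‖^2 / r : ℝ) : ℂ) := by
      rw [div_mul_eq_mul_div, Complex.mul_conj']
      push_cast
      ring
    rw [this, RCLike.re_to_complex, Complex.ofReal_re]
  have hnormy : ‖(w / (r:ℂ)) • v‖ ^ 2 = ‖w‖ ^ 2 / r := by
    rw [norm_smul]
    simp only [norm_div, Complex.norm_real, Real.norm_eq_abs, abs_of_pos hr]
    field_simp
    ring
  have hsq : ‖z - (1 + w / (r:ℂ)) • v‖ ^ 2 = ‖z - v‖ ^ 2 - ‖w‖ ^ 2 / r := by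
    rw [hsplit, @norm_sub_sq ℂ, hinner, hre, hnormy]
    ring
  have hle := h (1 + w / (r:ℂ))
  have hle2 : ‖z - v‖ ^ 2 ≤ ‖z - (1 + w / (r:ℂ)) • v‖ ^ 2 :=
    pow_le_pow_left₀ (norm_nonneg _) hle 2
  rw [hsq] at hle2
  have h3 : ‖w‖ ^ 2 ≤ 0 := by
    by_contra hc
    push_neg at hc
    have := div_pos hc hr
    linarith
  have h4 : ‖w‖ = 0 := by nlinarith [norm_nonneg w]
  exact norm_eq_zero.mp h4

/-- If `α̂` is `N₀`-sparse and minimizes `α ↦ ‖z - Dα‖` over `N₀`-sparse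
complex weight vectors, then `⟪Dα̂, z⟫ = ‖Dα̂‖²`. -/
theorem sparse_minimizer_projection {E : Type*} [NormedAddCommGroup E]
    [InnerProductSpace ℂ E] (J N₀ : ℕ) (hN₀ : 0 < N₀)
    (d : Fin J → E) (z : E) (αhat : Fin J → ℂ)
    (hsparse : Set.ncard {j | αhat j ≠ 0} ≤ N₀)
    (hmin : ∀ α : Fin J → ℂ, Set.ncard {j | α j ≠ 0} ≤ N₀ →
      ‖z - ∑ j, αhat j • d j‖ ≤ ‖z - ∑ j, α j • d j‖) :
    (inner ℂ (∑ j, αhat j • d j) z : ℂ) = (‖∑ j, αhat j • d j‖ : ℂ) ^ 2 := by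
  apply line_min_inner
  intro c
  have hsub : {j | c * αhat j ≠ 0} ⊆ {j | αhat j ≠ 0} := by
    intro j hj
    simp only [Set.mem_setOf_eq] at hj ⊢
    exact fun h0 => hj (by rw [h0, mul_zero])
  have hcard : Set.ncard {j | c * αhat j ≠ 0} ≤ N₀ :=
    le_trans (Set.ncard_le_ncard hsub (Set.toFinite _)) hsparse
  have := hmin (fun j => c * αhat j) hcard
  simpa [Finset.smul_sum, smul_smul] using this
end

section
/- Let E be a complex inner product space with inner product ⟪·,·⟫ conjugate-linear in the first argument, let d₁,…,d_J ∈ E, let z ∈ E be a unit vector, and let N₀ be a positive integer; write Dα = ∑_{j=1}^J α[j]·d_j. Suppose α̂ ∈ ℂ^J has at most N₀ nonzero coefficients, minimizes α ↦ ‖z − Dα‖ over all α with at most N₀ nonzero coefficients, and satisfies Dα̂ ≠ 0. Then for every α ∈ ℂ^J with at most N₀ nonzero coefficients and Dα ≠ 0, one has 1 − |⟪Dα̂/‖Dα̂‖, z⟫|² ≤ 1 − |⟪Dα/‖Dα‖, z⟫|²; i.e., α̂ also minimizes the squared full Procrustes distance between the shape of z and the shape of the normalized reconstruction Dα/‖Dα‖.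 -/
open scoped ComplexConjugate

lemma key_abs {E : Type*} [NormedAddCommGroup E] [InnerProductSpace ℂ E]
    (z w : E) :
    ‖(inner ℂ ((‖w‖ : ℂ)⁻¹ • w) z : ℂ)‖ = ‖w‖⁻¹ * ‖(inner ℂ w z : ℂ)‖ := by
  rw [inner_smul_left, map_inv₀, Complex.conj_ofReal, norm_mul, norm_inv, Complex.norm_real,
    norm_norm]

lemma key_expand {E : Type*} [NormedAddCommGroup E] [InnerProductSpace ℂ E]
    (z w : E) (hz : ‖z‖ = 1) (c : ℂ) :
    ‖z - c • w‖ ^ 2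
      = 1 - 2 * (c.re * (inner ℂ w z : ℂ).re + c.im * (inner ℂ w z : ℂ).im)
        + (c.re ^ 2 + c.im ^ 2) * ‖w‖ ^ 2 := by
  rw [@norm_sub_sq ℂ, inner_smul_right, hz, norm_smul]
  simp [Complex.mul_re, Complex.normSq_apply, Complex.sq_norm, mul_pow]
  rw [← inner_conj_symm z w, Complex.conj_re, Complex.conj_im]
  ring

lemma key_ineq {E : Type*} [NormedAddCommGroup E] [InnerProductSpace ℂ E]
    (z w : E) (hz : ‖z‖ = 1) (hw : w ≠ 0) (c : ℂ) :
    1 - ‖(inner ℂ ((‖w‖ : ℂ)⁻¹ • w) z : ℂ)‖ ^ 2 ≤ ‖z - c • w‖ ^ 2 := by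
  have hn : (0:ℝ) < ‖w‖ := norm_pos_iff.mpr hw
  have hn2 : (0:ℝ) < ‖w‖ ^ 2 := by positivity
  rw [key_expand z w hz c, key_abs, mul_pow, Complex.sq_norm, Complex.normSq_apply, inv_pow]
  have H2 : 2 * (c.re * (inner ℂ w z : ℂ).re + c.im * (inner ℂ w z : ℂ).im)
      - (c.re ^ 2 + c.im ^ 2) * ‖w‖ ^ 2
      ≤ ((inner ℂ w z : ℂ).re * (inner ℂ w z : ℂ).re
          + (inner ℂ w z : ℂ).im * (inner ℂ w z : ℂ).im) / ‖w‖ ^ 2 := by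
    rw [le_div_iff₀ hn2]
    nlinarith [sq_nonneg (c.re * ‖w‖ ^ 2 - (inner ℂ w z : ℂ).re),
      sq_nonneg (c.im * ‖w‖ ^ 2 - (inner ℂ w z : ℂ).im)]
  rw [div_eq_inv_mul] at H2
  linarith

lemma key_eq {E : Type*} [NormedAddCommGroup E] [InnerProductSpace ℂ E]
    (z w : E) (hz : ‖z‖ = 1) (hw : w ≠ 0) :
    ‖z - (((inner ℂ w z : ℂ)) / (‖w‖ : ℂ) ^ 2) • w‖ ^ 2
      = 1 - ‖(inner ℂ ((‖w‖ : ℂ)⁻¹ • w) z : ℂ)‖ ^ 2 := by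
  have hn : (0:ℝ) < ‖w‖ := norm_pos_iff.mpr hw
  set t : ℂ := (inner ℂ w z : ℂ) with ht
  have hcre : (t / (‖w‖ : ℂ) ^ 2).re = t.re / ‖w‖ ^ 2 := by
    rw [← Complex.ofReal_pow, Complex.div_ofReal_re]
  have hcim : (t / (‖w‖ : ℂ) ^ 2).im = t.im / ‖w‖ ^ 2 := by
    rw [← Complex.ofReal_pow, Complex.div_ofReal_im]
  rw [key_expand z w hz _, key_abs, mul_pow, Complex.sq_norm, Complex.normSq_apply, inv_pow,
    hcre, hcim, ← ht]
  field_simp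
  ring

/-- If `α̂` is `N₀`-sparse, minimizes `α ↦ ‖z - Dα‖` over `N₀`-sparse
weights, and `Dα̂ ≠ 0`, then `α̂` also minimizes the squared full Procrustes distance
`1 - |⟪Dα/‖Dα‖, z⟫|²` among `N₀`-sparse weights with `Dα ≠ 0`. -/
theorem sparse_minimizer_shape_distance {E : Type*} [NormedAddCommGroup E]
    [InnerProductSpace ℂ E] (J N₀ : ℕ) (hN₀ : 0 < N₀)
    (d : Fin J → E) (z : E) (hz : ‖z‖ = 1) (αhat : Fin J → ℂ)
    (hsparse : Set.ncard {j | αhat j ≠ 0} ≤ N₀)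
    (hmin : ∀ α : Fin J → ℂ, Set.ncard {j | α j ≠ 0} ≤ N₀ →
      ‖z - ∑ j, αhat j • d j‖ ≤ ‖z - ∑ j, α j • d j‖)
    (hne : (∑ j, αhat j • d j) ≠ 0) :
    ∀ α : Fin J → ℂ, Set.ncard {j | α j ≠ 0} ≤ N₀ → (∑ j, α j • d j) ≠ 0 →
      1 - ‖(inner ℂ ((‖∑ j, αhat j • d j‖ : ℂ)⁻¹ • ∑ j, αhat j • d j) z : ℂ)‖ ^ 2
        ≤ 1 - ‖(inner ℂ ((‖∑ j, α j • d j‖ : ℂ)⁻¹ • ∑ j, α j • d j) z : ℂ)‖ ^ 2 := by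
  intro α hα hwα
  set w : E := ∑ j, α j • d j with hw
  set what : E := ∑ j, αhat j • d j with hwhat
  set c : ℂ := (inner ℂ w z : ℂ) / (‖w‖ : ℂ) ^ 2 with hc
  have hscaled : (∑ j, (c * α j) • d j) = c • w := by
    rw [hw, Finset.smul_sum]
    exact Finset.sum_congr rfl fun j _ => by rw [smul_smul]
  have hsub : {j | c * α j ≠ 0} ⊆ {j | α j ≠ 0} := by
    intro j hj
    simp only [Set.mem_setOf_eq] at *
    exact fun h => hj (by rw [h, mul_zero])
  have hcard : Set.ncard {j | c * α j ≠ 0} ≤ N₀ :=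
    le_trans (Set.ncard_le_ncard hsub (Set.toFinite _)) hα
  have h1 : ‖z - what‖ ≤ ‖z - c • w‖ := by
    have := hmin (fun j => c * α j) hcard
    rwa [hscaled] at this
  have h2 : 1 - ‖(inner ℂ ((‖what‖ : ℂ)⁻¹ • what) z : ℂ)‖ ^ 2 ≤ ‖z - what‖ ^ 2 := by
    have := key_ineq z what hz hne 1
    rwa [one_smul] at this
  calc 1 - ‖(inner ℂ ((‖what‖ : ℂ)⁻¹ • what) z : ℂ)‖ ^ 2
      ≤ ‖z - what‖ ^ 2 := h2
    _ ≤ ‖z - c • w‖ ^ 2 := by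
        apply pow_le_pow_left₀ (norm_nonneg _) h1
    _ = 1 - ‖(inner ℂ ((‖w‖ : ℂ)⁻¹ • w) z : ℂ)‖ ^ 2 := key_eq z w hz hwα
end
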